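/- Consider the controlled SIS model ẋ = (−D − H(x) + B − XB)x where H(x) = diag(h_1(x_1),…,h_n(x_n)), with each h_i : [0,1] → ℝ continuous, nonnegative, nondecreasing, and h_i(0) = 0, B ≥ 0 irreducible and D positive diagonal. If s(−D + B) ≤ 0, then x = 0 is the unique equilibrium in the cube [0,1]ⁿ. -/
import Mathlib


open Matrix

/-- Irreducibility: for every nontrivial partition there is a nonzero cross entry. -/
def IsIrred {n : ℕ} (A : Matrix (Fin n) (Fin n) ℝ) : Prop :=
  ∀ S : Set (Fin n), S.Nonempty → Sᶜ.Nonempty → ∃ i ∈ S, ∃ j ∈ Sᶜ, A i j ≠ 0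

namespace SIShelper


variable {n : ℕ}

/-- Sum of absolute values of all entries. -/
def mmu (X : Matrix (Fin n) (Fin n) ℝ) : ℝ := ∑ i, ∑ j, |X i j|

lemma mmu_nonneg (X : Matrix (Fin n) (Fin n) ℝ) : 0 ≤ mmu X :=
  Finset.sum_nonneg fun _ _ => Finset.sum_nonneg fun _ _ => abs_nonneg _

lemma abs_entry_le_mmu (X : Matrix (Fin n) (Fin n) ℝ) (i j : Fin n) : |X i j| ≤ mmu X := by
  have h1 : |X i j| ≤ ∑ j', |X i j'| :=
    Finset.single_le_sum (fun k _ => abs_nonneg (X i k)) (Finset.mem_univ j)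
  exact h1.trans (Finset.single_le_sum
    (fun k _ => Finset.sum_nonneg fun l _ => abs_nonneg (X k l)) (Finset.mem_univ i))

lemma mmu_smul (a : ℝ) (X : Matrix (Fin n) (Fin n) ℝ) : mmu (a • X) = |a| * mmu X := by
  simp [mmu, Matrix.smul_apply, abs_mul, Finset.mul_sum]

lemma row_sum_le_mmu (X : Matrix (Fin n) (Fin n) ℝ) (i : Fin n) :
    ∑ j, |X i j| ≤ mmu X :=
  Finset.single_le_sum (fun k _ => Finset.sum_nonneg fun l _ => abs_nonneg (X k l))
    (Finset.mem_univ i)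

lemma mmu_mul (X Y : Matrix (Fin n) (Fin n) ℝ) : mmu (X * Y) ≤ mmu X * mmu Y := by
  have h1 : mmu (X * Y) ≤ ∑ i, ∑ j, ∑ l, |X i l| * |Y l j| := by
    apply Finset.sum_le_sum; intro i _
    apply Finset.sum_le_sum; intro j _
    rw [Matrix.mul_apply]
    exact (Finset.abs_sum_le_sum_abs _ _).trans (le_of_eq (by simp [abs_mul]))
  have h2 : ∑ i, ∑ j, ∑ l, |X i l| * |Y l j| = ∑ l, (∑ i, |X i l|) * (∑ j, |Y l j|) := by
    calc ∑ i, ∑ j, ∑ l, |X i l| * |Y l j| = ∑ i, ∑ l, ∑ j, |X i l| * |Y l j| :=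
          Finset.sum_congr rfl fun i _ => Finset.sum_comm
      _ = ∑ l, ∑ i, ∑ j, |X i l| * |Y l j| := Finset.sum_comm
      _ = ∑ l, (∑ i, |X i l|) * (∑ j, |Y l j|) := by
          refine Finset.sum_congr rfl fun l _ => ?_
          rw [Finset.sum_mul]
          exact Finset.sum_congr rfl fun i _ => (Finset.mul_sum _ _ _).symm
  have h3 : ∑ l, (∑ i, |X i l|) * (∑ j, |Y l j|) ≤ mmu X * mmu Y := by
    calc ∑ l, (∑ i, |X i l|) * (∑ j, |Y l j|)
        ≤ ∑ l, (∑ i, |X i l|) * mmu Y := by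
          apply Finset.sum_le_sum; intro l _
          exact mul_le_mul_of_nonneg_left (row_sum_le_mmu Y l)
            (Finset.sum_nonneg fun k _ => abs_nonneg _)
      _ = (∑ l, ∑ i, |X i l|) * mmu Y := by rw [Finset.sum_mul]
      _ = mmu X * mmu Y := by rw [Finset.sum_comm]; rfl
  exact h1.trans (h2 ▸ h3)




lemma mmu_pow (X : Matrix (Fin n) (Fin n) ℝ) : ∀ K, 1 ≤ K → mmu (X ^ K) ≤ mmu X ^ K := by
  intro K hK
  induction K with
  | zero => omega
  | succ k ih =>
    rcases Nat.eq_or_lt_of_le hK with h1 | h1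
    · simp [← h1]
    · have hk : 1 ≤ k := by omega
      calc mmu (X ^ (k + 1)) = mmu (X ^ k * X) := by rw [pow_succ]
        _ ≤ mmu (X ^ k) * mmu X := mmu_mul _ _
        _ ≤ mmu X ^ k * mmu X :=
            mul_le_mul_of_nonneg_right (ih hk) (mmu_nonneg X)
        _ = mmu X ^ (k + 1) := by rw [pow_succ]

lemma entry_mul_nonneg {X Y : Matrix (Fin n) (Fin n) ℝ}
    (hX : ∀ i j, 0 ≤ X i j) (hY : ∀ i j, 0 ≤ Y i j) : ∀ i j, 0 ≤ (X * Y) i j := by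
  intro i j
  rw [Matrix.mul_apply]
  exact Finset.sum_nonneg fun l _ => mul_nonneg (hX i l) (hY l j)

lemma entry_pow_nonneg {X : Matrix (Fin n) (Fin n) ℝ}
    (hX : ∀ i j, 0 ≤ X i j) : ∀ (k : ℕ) (i j : Fin n), 0 ≤ (X ^ k) i j := by
  intro k
  induction k with
  | zero => intro i j; simp [Matrix.one_apply]; split <;> norm_num
  | succ m ih => rw [pow_succ]; exact entry_mul_nonneg ih hX

lemma entry_sum_pow_nonneg {X : Matrix (Fin n) (Fin n) ℝ}
    (hX : ∀ i j, 0 ≤ X i j) (K : ℕ) :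
    ∀ i j, 0 ≤ (∑ k ∈ Finset.range K, X ^ k) i j := by
  intro i j
  rw [Matrix.sum_apply]
  exact Finset.sum_nonneg fun k _ => entry_pow_nonneg hX k i j

lemma inv_entry_nonneg_aux (N e : Matrix (Fin n) (Fin n) ℝ)
    (hN : IsUnit N.det) (hq0 : 0 ≤ mmu e) (hq : mmu e < 1)
    (W : ℕ → Matrix (Fin n) (Fin n) ℝ) (hW : ∀ K i j, 0 ≤ W K i j)
    (hid : ∀ K, W K * N = 1 - e ^ K) : ∀ i j, 0 ≤ N⁻¹ i j := by
  intro i j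
  have hInv : N * N⁻¹ = 1 := Matrix.mul_nonsing_inv N hN
  have key : ∀ K, N⁻¹ = W K + e ^ K * N⁻¹ := by
    intro K
    have h1 : W K = (1 - e ^ K) * N⁻¹ := by
      calc W K = W K * (N * N⁻¹) := by rw [hInv, Matrix.mul_one]
        _ = (W K * N) * N⁻¹ := by rw [Matrix.mul_assoc]
        _ = (1 - e ^ K) * N⁻¹ := by rw [hid]
    rw [h1, Matrix.sub_mul, Matrix.one_mul]
    abel
  have hbound : ∀ K, 1 ≤ K → -(mmu N⁻¹ * mmu e ^ K) ≤ N⁻¹ i j := by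
    intro K hK
    have h2 : N⁻¹ i j = W K i j + (e ^ K * N⁻¹) i j := by
      conv_lhs => rw [key K]
      rw [Matrix.add_apply]
    have h3 : |(e ^ K * N⁻¹) i j| ≤ mmu e ^ K * mmu N⁻¹ := by
      calc |(e ^ K * N⁻¹) i j| ≤ mmu (e ^ K * N⁻¹) := abs_entry_le_mmu _ i j
        _ ≤ mmu (e ^ K) * mmu N⁻¹ := mmu_mul _ _
        _ ≤ mmu e ^ K * mmu N⁻¹ :=
            mul_le_mul_of_nonneg_right (mmu_pow e K hK) (mmu_nonneg _)
    have h4 := neg_abs_le ((e ^ K * N⁻¹) i j)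
    have h5 := hW K i j
    rw [h2]
    nlinarith [h3, h4, h5]
  have htend : Filter.Tendsto (fun K : ℕ => -(mmu N⁻¹ * mmu e ^ K)) Filter.atTop (nhds 0) := by
    have h6 : Filter.Tendsto (fun K : ℕ => mmu e ^ K) Filter.atTop (nhds 0) :=
      tendsto_pow_atTop_nhds_zero_of_lt_one hq0 hq
    have := (h6.const_mul (mmu N⁻¹)).neg
    simpa using this
  have := le_of_tendsto htend (Filter.eventually_atTop.mpr ⟨1, fun K hK => hbound K hK⟩)
  exact this

/-- geometric sum identity -/
lemma geom_identity (e : Matrix (Fin n) (Fin n) ℝ) (K : ℕ) :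
    (∑ k ∈ Finset.range K, e ^ k) * (1 - e) = 1 - e ^ K := by
  have := geom_sum_mul e K
  have h2 : (1 : Matrix (Fin n) (Fin n) ℝ) - e = -(e - 1) := by abel
  rw [h2, mul_neg, this]
  abel

lemma resolvent_entry_nonneg (A : Matrix (Fin n) (Fin n) ℝ) (c : ℝ) (hc : 0 ≤ c)
    (hA : ∀ i j, 0 ≤ A i j)
    (hdet : ∀ s : ℝ, c < s → IsUnit (s • (1 : Matrix (Fin n) (Fin n) ℝ) - A).det)
    {s₀ : ℝ} (hs₀ : c < s₀) :
    ∀ i j, 0 ≤ ((s₀ • (1 : Matrix (Fin n) (Fin n) ℝ) - A)⁻¹) i j := by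
  set R : ℝ → Matrix (Fin n) (Fin n) ℝ :=
    fun s => (s • (1 : Matrix (Fin n) (Fin n) ℝ) - A)⁻¹ with hR
  -- Step 1: for large s, R s has nonnegative entries
  have step_large : ∀ s : ℝ, c < s → mmu A < s → ∀ i j, 0 ≤ R s i j := by
    intro s hcs hmus
    have hspos : 0 < s := lt_of_le_of_lt hc hcs
    set e : Matrix (Fin n) (Fin n) ℝ := s⁻¹ • A with he
    have hee : ∀ i j, 0 ≤ e i j := by
      intro i j
      simp only [he, Matrix.smul_apply, smul_eq_mul]
      exact mul_nonneg (by positivity) (hA i j)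
    have hmue : mmu e = s⁻¹ * mmu A := by
      rw [he, mmu_smul, abs_of_nonneg (by positivity)]
    have hq : mmu e < 1 := by
      rw [hmue, ← div_eq_inv_mul]
      exact (div_lt_one hspos).2 hmus
    have hfact : s • (1 : Matrix (Fin n) (Fin n) ℝ) - A = s • ((1 : Matrix (Fin n) (Fin n) ℝ) - e) := by
      rw [he, smul_sub, smul_smul, mul_inv_cancel₀ hspos.ne', one_smul]
    apply inv_entry_nonneg_aux _ e (hdet s hcs)
      (mmu_nonneg e) hq (fun K => s⁻¹ • (∑ k ∈ Finset.range K, e ^ k))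
    · intro K i j
      simp only [Matrix.smul_apply, smul_eq_mul]
      exact mul_nonneg (by positivity) (entry_sum_pow_nonneg hee K i j)
    · intro K
      rw [hfact, smul_mul_assoc, mul_smul_comm, smul_smul, inv_mul_cancel₀ hspos.ne',
        one_smul, geom_identity]
  -- Step 2: stepping down
  have step_down : ∀ s₁ s : ℝ, c < s → s ≤ s₁ → (∀ i j, 0 ≤ R s₁ i j) →
      (s₁ - s) * mmu (R s₁) < 1 → ∀ i j, 0 ≤ R s i j := by
    intro s₁ s hcs hss₁ hR₁ hsmall
    have hcs₁ : c < s₁ := lt_of_lt_of_le hcs hss₁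
    set R₁ : Matrix (Fin n) (Fin n) ℝ := R s₁ with hR₁def
    have hR₁N₁ : R₁ * (s₁ • (1 : Matrix (Fin n) (Fin n) ℝ) - A) = 1 :=
      Matrix.nonsing_inv_mul _ (hdet s₁ hcs₁)
    set e : Matrix (Fin n) (Fin n) ℝ := (s₁ - s) • R₁ with he
    have hee : ∀ i j, 0 ≤ e i j := by
      intro i j
      simp only [he, Matrix.smul_apply, smul_eq_mul]
      exact mul_nonneg (by linarith) (hR₁ i j)
    have hmue : mmu e < 1 := by
      rw [he, mmu_smul, abs_of_nonneg (by linarith)]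
      exact hsmall
    have hkey : R₁ * (s • (1 : Matrix (Fin n) (Fin n) ℝ) - A) = 1 - e := by
      have hsplit : s • (1 : Matrix (Fin n) (Fin n) ℝ) - A
          = (s₁ • (1 : Matrix (Fin n) (Fin n) ℝ) - A) - (s₁ - s) • (1 : Matrix (Fin n) (Fin n) ℝ) := by
        rw [sub_smul]; abel
      rw [hsplit, Matrix.mul_sub, hR₁N₁, mul_smul_comm, Matrix.mul_one, he]
    apply inv_entry_nonneg_aux _ e (hdet s hcs) (mmu_nonneg e) hmue
      (fun K => (∑ k ∈ Finset.range K, e ^ k) * R₁)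
    · intro K i j
      exact entry_mul_nonneg (entry_sum_pow_nonneg hee K) hR₁ i j
    · intro K
      rw [Matrix.mul_assoc, hkey, geom_identity]
  -- Step 3: continuity of entries of R on Icc
  set T : ℝ := max s₀ (max c (mmu A)) + 1 with hT
  have hs₀T : s₀ ≤ T := by
    have := le_max_left s₀ (max c (mmu A)); linarith
  have hcT : c < T := by
    have h1 := le_max_left c (mmu A)
    have h2 := le_max_right s₀ (max c (mmu A))
    linarith
  have hmuT : mmu A < T := by
    have h1 := le_max_right c (mmu A)
    have h2 := le_max_right s₀ (max c (mmu A))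
    linarith
  have hcont : ∀ i j, ContinuousOn (fun s => R s i j) (Set.Icc s₀ T) := by
    intro i j
    have hf : Continuous fun s : ℝ => s • (1 : Matrix (Fin n) (Fin n) ℝ) - A :=
      (continuous_id.smul continuous_const).sub continuous_const
    have hdetc : Continuous fun s : ℝ => (s • (1 : Matrix (Fin n) (Fin n) ℝ) - A).det :=
      hf.matrix_det
    have hadjc : Continuous fun s : ℝ => (s • (1 : Matrix (Fin n) (Fin n) ℝ) - A).adjugate i j :=
      hf.matrix_adjugate.matrix_elem i j
    have heqR : ∀ s ∈ Set.Icc s₀ T, R s i j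
        = ((s • (1 : Matrix (Fin n) (Fin n) ℝ) - A).det)⁻¹
          * (s • (1 : Matrix (Fin n) (Fin n) ℝ) - A).adjugate i j := by
      intro s _
      show (s • (1 : Matrix (Fin n) (Fin n) ℝ) - A)⁻¹ i j = _
      rw [Matrix.inv_def, ← Ring.inverse_eq_inv', Matrix.smul_apply, smul_eq_mul]
    apply ContinuousOn.congr _ heqR
    apply ContinuousOn.mul _ hadjc.continuousOn
    apply ContinuousOn.inv₀ hdetc.continuousOn
    intro s hsmem
    exact (hdet s (lt_of_lt_of_le hs₀ hsmem.1)).ne_zero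
  -- Step 4: the closed set and its infimum
  set K : Set ℝ := Set.Icc s₀ T ∩ ⋂ i, ⋂ j, (Set.Icc s₀ T ∩ (fun s => R s i j) ⁻¹' Set.Ici 0) with hK
  have hKclosed : IsClosed K := by
    apply IsClosed.inter isClosed_Icc
    apply isClosed_iInter; intro i
    apply isClosed_iInter; intro j
    exact (hcont i j).preimage_isClosed_of_isClosed isClosed_Icc
      (isClosed_Ici (a := (0:ℝ)))
  have hTK : T ∈ K := by
    constructor
    · exact ⟨hs₀T, le_refl T⟩
    · simp only [Set.mem_iInter, Set.mem_inter_iff, Set.mem_preimage, Set.mem_Ici]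
      intro i j
      exact ⟨⟨hs₀T, le_refl T⟩, step_large T hcT hmuT i j⟩
  have hKne : K.Nonempty := ⟨T, hTK⟩
  have hKbdd : BddBelow K := ⟨s₀, fun t ht => ht.1.1⟩
  set u : ℝ := sInf K with hu
  have huK : u ∈ K := hKclosed.csInf_mem hKne hKbdd
  have hus₀ : s₀ ≤ u := huK.1.1
  have huRpos : ∀ i j, 0 ≤ R u i j := by
    intro i j
    have := huK.2
    simp only [Set.mem_iInter, Set.mem_inter_iff, Set.mem_preimage, Set.mem_Ici] at this
    exact (this i j).2
  have hucu : c < u := lt_of_lt_of_le hs₀ hus₀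
  -- Claim: u = s₀
  have hule : u ≤ s₀ := by
    by_contra hcon
    push_neg at hcon
    set m : ℝ := mmu (R u) with hm
    have hm0 : 0 ≤ m := mmu_nonneg _
    set s : ℝ := max s₀ (u - 1 / (2 * (m + 1))) with hs
    have hδpos : 0 < 1 / (2 * (m + 1)) := by positivity
    have hslt : s < u := max_lt hcon (by linarith)
    have hsles : s₀ ≤ s := le_max_left _ _
    have hcs : c < s := lt_of_lt_of_le hs₀ hsles
    have hsu : s ≤ u := hslt.le
    have husmall : (u - s) * m < 1 := by
      have h1 : u - 1 / (2 * (m + 1)) ≤ s := le_max_right _ _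
      have h2 : u - s ≤ 1 / (2 * (m + 1)) := by linarith
      have h3 : (u - s) * m ≤ 1 / (2 * (m + 1)) * m := by
        apply mul_le_mul_of_nonneg_right h2 hm0
      have h4 : 1 / (2 * (m + 1)) * m < 1 := by
        rw [div_mul_eq_mul_div, one_mul, div_lt_one (by positivity)]
        linarith
      linarith
    have hRs : ∀ i j, 0 ≤ R s i j := step_down u s hcs hsu huRpos husmall
    have hsK : s ∈ K := by
      refine ⟨⟨hsles, le_trans hsu huK.1.2⟩, ?_⟩
      simp only [Set.mem_iInter, Set.mem_inter_iff, Set.mem_preimage, Set.mem_Ici]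
      intro i j
      exact ⟨⟨hsles, le_trans hsu huK.1.2⟩, hRs i j⟩
    have := csInf_le hKbdd hsK
    rw [← hu] at this
    linarith
  have hueq : u = s₀ := le_antisymm hule hus₀
  intro i j
  have := huRpos i j
  rw [hueq] at this
  exact this


end SIShelper

/-- For the controlled SIS model with controllers h_i : [0,1] → ℝ continuous,
nonnegative, nondecreasing and h_i(0) = 0: if s(−D + B) ≤ 0 then x = 0 is the
unique equilibrium in the unit cube. -/
theorem controlled_SIS_only_healthy_equilibrium {n : ℕ}
    (d : Fin n → ℝ) (hd : ∀ i, 0 < d i)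
    (b : Matrix (Fin n) (Fin n) ℝ) (hb : ∀ i j, 0 ≤ b i j) (hirr : IsIrred b)
    (h : Fin n → ℝ → ℝ)
    (hcont : ∀ i, ContinuousOn (h i) (Set.Icc 0 1))
    (hnonneg : ∀ i, ∀ s ∈ Set.Icc (0 : ℝ) 1, 0 ≤ h i s)
    (hmono : ∀ i, MonotoneOn (h i) (Set.Icc 0 1))
    (hzero : ∀ i, h i 0 = 0)
    (hs : ∀ μ ∈ spectrum ℂ ((-(Matrix.diagonal d) + b).map (Complex.ofReal)),
      μ.re ≤ 0)
    (x : Fin n → ℝ) (hx_cube : ∀ i, x i ∈ Set.Icc (0 : ℝ) 1)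
    (heq : ∀ i, (d i + h i (x i)) * x i - (1 - x i) * ∑ j, b i j * x j = 0) :
    x = 0 := by
  by_contra hx0
  obtain ⟨i₀, hi₀⟩ : ∃ i, x i ≠ 0 := Function.ne_iff.mp hx0
  -- basic bounds
  have hx0le : ∀ i, 0 ≤ x i := fun i => (hx_cube i).1
  have hx1le : ∀ i, x i ≤ 1 := fun i => (hx_cube i).2
  -- every coordinate is < 1
  have hlt1 : ∀ i, x i < 1 := by
    intro i
    rcases lt_or_eq_of_le (hx1le i) with hlt | heq1
    · exact hlt
    · exfalso
      have he := heq i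
      rw [heq1] at he
      have hh1 : 0 ≤ h i 1 := hnonneg i 1 ⟨zero_le_one, le_refl 1⟩
      have hdi := hd i
      nlinarith [he]
  -- every coordinate is positive
  have hpos : ∀ i, 0 < x i := by
    intro i
    rcases lt_or_eq_of_le (hx0le i) with hlt | heq0
    · exact hlt
    · exfalso
      have hS : ({i' : Fin n | x i' = 0}).Nonempty := ⟨i, heq0.symm⟩
      have hSc : ({i' : Fin n | x i' = 0}ᶜ).Nonempty := ⟨i₀, hi₀⟩
      obtain ⟨i₁, hi₁, j₁, hj₁, hbne⟩ := hirr _ hS hSc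
      have hxi₁ : x i₁ = 0 := hi₁
      have hsum : ∑ j, b i₁ j * x j = 0 := by
        have he := heq i₁
        rw [hxi₁] at he
        simpa using he
      have hterm : b i₁ j₁ * x j₁ = 0 :=
        (Finset.sum_eq_zero_iff_of_nonneg
          (fun j _ => mul_nonneg (hb i₁ j) (hx0le j))).mp hsum j₁ (Finset.mem_univ j₁)
      have hxj₁ : x j₁ ≠ 0 := hj₁
      exact (mul_ne_zero hbne hxj₁) hterm
  -- the sum is positive and the strict gap
  have hQ : ∀ i, (1 - x i) * (∑ j, b i j * x j) = (d i + h i (x i)) * x i := by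
    intro i; linarith [heq i]
  have hbxpos : ∀ i, 0 < ∑ j, b i j * x j := by
    intro i
    have hP : 0 < (d i + h i (x i)) * x i :=
      mul_pos (by linarith [hd i, hnonneg i (x i) (hx_cube i)]) (hpos i)
    have h1x : 0 < 1 - x i := by linarith [hlt1 i]
    nlinarith [hQ i]
  have hgap : ∀ i, 0 < (∑ j, b i j * x j) - d i * x i := by
    intro i
    have hh : 0 ≤ h i (x i) := hnonneg i (x i) (hx_cube i)
    nlinarith [hQ i, mul_pos (hpos i) (hbxpos i), mul_nonneg hh (hpos i).le]
  -- set up the matrices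
  have hne : (Finset.univ : Finset (Fin n)).Nonempty := ⟨i₀, Finset.mem_univ i₀⟩
  set M : Matrix (Fin n) (Fin n) ℝ := -(Matrix.diagonal d) + b with hM
  set c : ℝ := Finset.univ.sup' hne d with hc
  have hcd : ∀ i, d i ≤ c := fun i => Finset.le_sup' d (Finset.mem_univ i)
  have hc0 : 0 ≤ c := le_trans (hd i₀).le (hcd i₀)
  set ε : ℝ := Finset.univ.inf' hne (fun i => (∑ j, b i j * x j) - d i * x i) with hε
  have hεpos : 0 < ε := by
    rw [hε, Finset.lt_inf'_iff]
    intro i _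
    exact hgap i
  have hεle : ∀ i, ε ≤ (∑ j, b i j * x j) - d i * x i :=
    fun i => Finset.inf'_le _ (Finset.mem_univ i)
  set A : Matrix (Fin n) (Fin n) ℝ := c • (1 : Matrix (Fin n) (Fin n) ℝ) + M with hA
  have hAnn : ∀ i j, 0 ≤ A i j := by
    intro i j
    rcases eq_or_ne i j with rfl | hij
    · simp only [hA, hM, Matrix.add_apply, Matrix.smul_apply, Matrix.one_apply_eq,
        Matrix.neg_apply, Matrix.diagonal_apply_eq, smul_eq_mul, mul_one]
      linarith [hcd i, hb i i]
    · simp only [hA, hM, Matrix.add_apply, Matrix.smul_apply, Matrix.one_apply_ne hij,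
        Matrix.neg_apply, Matrix.diagonal_apply_ne _ hij, smul_eq_mul, mul_zero]
      linarith [hb i j]
  -- determinant condition from the spectral hypothesis
  have hdetA : ∀ s : ℝ, c < s → IsUnit (s • (1 : Matrix (Fin n) (Fin n) ℝ) - A).det := by
    intro s hcs
    have htpos : 0 < s - c := by linarith
    have hmat : s • (1 : Matrix (Fin n) (Fin n) ℝ) - A
        = (s - c) • (1 : Matrix (Fin n) (Fin n) ℝ) - M := by
      rw [hA, sub_smul]; abel
    rw [hmat]
    rw [isUnit_iff_ne_zero]
    intro hdet0
    have hdetC : (((s - c) • (1 : Matrix (Fin n) (Fin n) ℝ) - M).map Complex.ofReal).det = 0 := by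
      have h1 := RingHom.map_det Complex.ofRealHom ((s - c) • (1 : Matrix (Fin n) (Fin n) ℝ) - M)
      rw [RingHom.mapMatrix_apply] at h1
      have h2 : ((s - c) • (1 : Matrix (Fin n) (Fin n) ℝ) - M).map ⇑Complex.ofRealHom
          = ((s - c) • (1 : Matrix (Fin n) (Fin n) ℝ) - M).map Complex.ofReal := rfl
      rw [h2] at h1
      rw [← h1, hdet0]
      simp
    have hmapeq : (((s - c) • (1 : Matrix (Fin n) (Fin n) ℝ) - M).map Complex.ofReal)
        = ((s - c : ℝ) : ℂ) • (1 : Matrix (Fin n) (Fin n) ℂ) - M.map Complex.ofReal := by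
      ext i j
      rcases eq_or_ne i j with rfl | hij
      · simp [Matrix.map_apply, Matrix.sub_apply, Matrix.smul_apply, Matrix.one_apply_eq]
      · simp [Matrix.map_apply, Matrix.sub_apply, Matrix.smul_apply, Matrix.one_apply_ne hij]
    have hmem : ((s - c : ℝ) : ℂ) ∈ spectrum ℂ (M.map Complex.ofReal) := by
      rw [spectrum.mem_iff]
      intro hunit
      have hdu := (Matrix.isUnit_iff_isUnit_det _).mp hunit
      rw [Algebra.algebraMap_eq_smul_one] at hdu
      rw [← hmapeq] at hdu
      rw [hdetC] at hdu
      exact hdu.ne_zero rfl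
    have := hs _ hmem
    rw [Complex.ofReal_re] at this
    linarith
  -- apply the resolvent lemma at s₀ = c + ε
  have hRpos := SIShelper.resolvent_entry_nonneg A c hc0 hAnn hdetA (s₀ := c + ε) (by linarith)
  set N : Matrix (Fin n) (Fin n) ℝ := (c + ε) • (1 : Matrix (Fin n) (Fin n) ℝ) - A with hN
  have hNdet : IsUnit N.det := hdetA (c + ε) (by linarith)
  -- N *ᵥ x is entrywise nonpositive
  have hNx : ∀ i, (N *ᵥ x) i ≤ 0 := by
    intro i
    have hcompute : (N *ᵥ x) i = (c + ε) * x i - (c * x i + (-(d i * x i) + ∑ j, b i j * x j)) := by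
      rw [hN, hA, hM, Matrix.sub_mulVec, Matrix.add_mulVec, Matrix.add_mulVec,
        Matrix.neg_mulVec, Matrix.smul_mulVec, Matrix.smul_mulVec,
        Matrix.one_mulVec]
      simp only [Pi.sub_apply, Pi.add_apply, Pi.smul_apply, Pi.neg_apply, smul_eq_mul]
      rw [Matrix.mulVec_diagonal]
      rfl
    have h1 : ε * x i ≤ ε := by nlinarith [hx1le i, hεpos]
    rw [hcompute]
    linarith [hεle i]
  -- conclude
  have hNinv : ∀ i j, 0 ≤ N⁻¹ i j := by
    intro i j
    exact hRpos i j
  have hxeq : x = N⁻¹ *ᵥ (N *ᵥ x) := by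
    rw [Matrix.mulVec_mulVec, Matrix.nonsing_inv_mul N hNdet, Matrix.one_mulVec]
  have hxle : x i₀ ≤ 0 := by
    rw [hxeq]
    show ∑ j, N⁻¹ i₀ j * (N *ᵥ x) j ≤ 0
    apply Finset.sum_nonpos
    intro j _
    exact mul_nonpos_of_nonneg_of_nonpos (hNinv i₀ j) (hNx j)
  linarith [hpos i₀]
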